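/- Let F be a finite field and let α₁,...,α_k be pairwise distinct elements of F. The number of matrices A ∈ Mₙ(F) that are similar to a diagonal matrix whose diagonal entries include every α_i at least once and contain only values from {α₁,...,α_k} equals the sum over all tuples (n₁,...,n_k) of positive integers with n₁+...+n_k = n of |GLₙ(F)| / (|GL_{n₁}(F)|·...·|GL_{n_k}(F)|). -/
import Mathlib

namespace Stmt3Aux

open Matrix MulAction

variable {F : Type} [Field F] [Fintype F] [DecidableEq F] {n k : ℕ}

/-- The diagonal matrix associated to a labelling `d`. -/
def Dg (α : Fin k → F) (d : Fin n → Fin k) : Matrix (Fin n) (Fin n) F :=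
  Matrix.diagonal fun j => α (d j)

/-- Assemble blockwise data into a block-diagonal matrix. -/
def emb (d : Fin n → Fin k) (B : ∀ i, Matrix {j // d j = i} {j // d j = i} F) :
    Matrix (Fin n) (Fin n) F :=
  Matrix.of fun p q => if h : d p = d q then B (d p) ⟨p, rfl⟩ ⟨q, h.symm⟩ else 0

/-- Extract the diagonal blocks of a matrix. -/
def blk (d : Fin n → Fin k) (P : Matrix (Fin n) (Fin n) F) (i : Fin k) :
    Matrix {j // d j = i} {j // d j = i} F :=
  Matrix.of fun a b => P a.1 b.1

lemma emb_apply (d : Fin n → Fin k) (B : ∀ i, Matrix {j // d j = i} {j // d j = i} F)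
    {p q : Fin n} {i : Fin k} (hp : d p = i) (hq : d q = i) :
    emb d B p q = B i ⟨p, hp⟩ ⟨q, hq⟩ := by
  subst hp
  exact dif_pos hq.symm

lemma emb_apply_ne (d : Fin n → Fin k) (B : ∀ i, Matrix {j // d j = i} {j // d j = i} F)
    {p q : Fin n} (h : d p ≠ d q) : emb d B p q = 0 :=
  dif_neg h

lemma blk_emb (d : Fin n → Fin k) (B : ∀ i, Matrix {j // d j = i} {j // d j = i} F) :
    blk d (emb d B) = B := by
  funext i
  ext a b
  exact emb_apply d B a.2 b.2

lemma emb_blk (d : Fin n → Fin k) {P : Matrix (Fin n) (Fin n) F}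
    (hP : ∀ p q, d p ≠ d q → P p q = 0) : emb d (blk d P) = P := by
  ext p q
  by_cases h : d p = d q
  · rw [emb_apply d _ h rfl]; rfl
  · rw [emb_apply_ne d _ h]
    exact (hP p q h).symm

lemma emb_mul (d : Fin n → Fin k) (B C : ∀ i, Matrix {j // d j = i} {j // d j = i} F) :
    emb d B * emb d C = emb d (fun i => B i * C i) := by
  ext p q
  rw [Matrix.mul_apply, ← Fintype.sum_fiberwise d (fun r => emb d B p r * emb d C r q)]
  by_cases h : d p = d q
  · rw [emb_apply d _ h rfl, Matrix.mul_apply, Finset.sum_eq_single (d q)]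
    · apply Finset.sum_congr rfl
      intro r _
      rw [emb_apply d B h r.2, emb_apply d C r.2 rfl]
    · intro i _ hne
      apply Finset.sum_eq_zero
      intro r _
      exact mul_eq_zero_of_right _ (emb_apply_ne d C (r.2.trans_ne hne))
    · intro hq
      exact absurd (Finset.mem_univ _) hq
  · rw [emb_apply_ne d _ h]
    apply Finset.sum_eq_zero
    intro i _
    apply Finset.sum_eq_zero
    intro r _
    by_cases hr : d p = d r.1
    · exact mul_eq_zero_of_right _ (emb_apply_ne d C (fun hc => h (hr.trans hc)))
    · exact mul_eq_zero_of_left (emb_apply_ne d B hr) _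

lemma emb_one (d : Fin n → Fin k) : emb d (fun _ => 1) = (1 : Matrix (Fin n) (Fin n) F) := by
  ext p q
  by_cases h : d p = d q
  · rw [emb_apply d _ h rfl]
    simp [Matrix.one_apply, Subtype.ext_iff]
  · rw [emb_apply_ne d _ h]
    have : p ≠ q := fun hc => h (by rw [hc])
    simp [Matrix.one_apply, this]

lemma blk_mul (d : Fin n → Fin k) {P Q : Matrix (Fin n) (Fin n) F}
    (hP : ∀ p q, d p ≠ d q → P p q = 0) (hQ : ∀ p q, d p ≠ d q → Q p q = 0) (i : Fin k) :
    blk d P i * blk d Q i = blk d (P * Q) i := by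
  have hPQ : P * Q = emb d (fun i => blk d P i * blk d Q i) := by
    rw [← emb_mul, emb_blk d hP, emb_blk d hQ]
  rw [hPQ, blk_emb]

lemma blk_one (d : Fin n → Fin k) (i : Fin k) :
    blk d (1 : Matrix (Fin n) (Fin n) F) i = 1 := by
  ext a b
  show (1 : Matrix (Fin n) (Fin n) F) a.1 b.1 = _
  simp [Matrix.one_apply, Subtype.ext_iff]

lemma comm_iff {α : Fin k → F} (hα : Function.Injective α) (d : Fin n → Fin k)
    (P : Matrix (Fin n) (Fin n) F) :
    P * Dg α d = Dg α d * P ↔ ∀ p q, d p ≠ d q → P p q = 0 := by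
  constructor
  · intro h p q hpq
    have h2 : P p q * α (d q) = α (d p) * P p q := by
      have := congr_fun (congr_fun h p) q
      simpa [Dg, Matrix.mul_diagonal, Matrix.diagonal_mul] using this
    have hne : α (d q) - α (d p) ≠ 0 := sub_ne_zero.mpr fun hc => hpq ((hα hc).symm)
    have h3 : P p q * (α (d q) - α (d p)) = 0 := by linear_combination h2
    rcases mul_eq_zero.mp h3 with h4 | h4
    · exact h4
    · exact absurd h4 hne
  · intro h
    ext p q
    rw [Dg, Matrix.mul_diagonal, Matrix.diagonal_mul]
    by_cases hpq : d p = d q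
    · rw [hpq, mul_comm]
    · rw [h p q hpq, zero_mul, mul_zero]

lemma mem_stab (α : Fin k → F) (d : Fin n → Fin k)
    (g : ConjAct (Matrix (Fin n) (Fin n) F)ˣ) :
    g ∈ MulAction.stabilizer (ConjAct (Matrix (Fin n) (Fin n) F)ˣ) (Dg α d) ↔
      (↑(ConjAct.ofConjAct g) : Matrix (Fin n) (Fin n) F) * Dg α d =
        Dg α d * (↑(ConjAct.ofConjAct g) : Matrix (Fin n) (Fin n) F) := by
  rw [MulAction.mem_stabilizer_iff, ConjAct.units_smul_def, Units.mul_inv_eq_iff_eq_mul]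

lemma inv_comm (u : (Matrix (Fin n) (Fin n) F)ˣ) (X : Matrix (Fin n) (Fin n) F)
    (h : (u : Matrix (Fin n) (Fin n) F) * X = X * (u : Matrix (Fin n) (Fin n) F)) :
    (↑u⁻¹ : Matrix (Fin n) (Fin n) F) * X = X * (↑u⁻¹ : Matrix (Fin n) (Fin n) F) := by
  have h2 := congrArg
    (fun Y => (↑u⁻¹ : Matrix (Fin n) (Fin n) F) * Y * (↑u⁻¹ : Matrix (Fin n) (Fin n) F)) h
  simpa only [mul_assoc, Units.inv_mul_cancel_left, Units.mul_inv, mul_one] using h2.symm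

/-- The block-diagonal unit assembled from blockwise units. -/
def embU (d : Fin n → Fin k) (B : ∀ i, (Matrix {j // d j = i} {j // d j = i} F)ˣ) :
    (Matrix (Fin n) (Fin n) F)ˣ where
  val := emb d fun i => ((B i : Matrix {j // d j = i} {j // d j = i} F))
  inv := emb d fun i => (((B i)⁻¹ : (Matrix {j // d j = i} {j // d j = i} F)ˣ) :
    Matrix {j // d j = i} {j // d j = i} F)
  val_inv := by
    rw [emb_mul]
    exact (congrArg (emb d) (funext fun i => Units.mul_inv (B i))).trans (emb_one d)
  inv_val := by
    rw [emb_mul]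
    exact (congrArg (emb d) (funext fun i => Units.inv_mul (B i))).trans (emb_one d)

lemma embU_val (d : Fin n → Fin k) (B : ∀ i, (Matrix {j // d j = i} {j // d j = i} F)ˣ) :
    (embU d B : Matrix (Fin n) (Fin n) F) =
      emb d fun i => ((B i : Matrix {j // d j = i} {j // d j = i} F)) := rfl

lemma stab_card {α : Fin k → F} (hα : Function.Injective α) (d : Fin n → Fin k) :
    Nat.card (MulAction.stabilizer (ConjAct (Matrix (Fin n) (Fin n) F)ˣ) (Dg α d)) =
      ∏ i : Fin k, Nat.card (Matrix {j // d j = i} {j // d j = i} F)ˣ := by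
  have hPv : ∀ g : MulAction.stabilizer (ConjAct (Matrix (Fin n) (Fin n) F)ˣ) (Dg α d),
      ∀ p q, d p ≠ d q →
        ((ConjAct.ofConjAct (g : ConjAct (Matrix (Fin n) (Fin n) F)ˣ) :
            (Matrix (Fin n) (Fin n) F)ˣ) : Matrix (Fin n) (Fin n) F) p q = 0 :=
    fun g => (comm_iff hα d _).mp ((mem_stab α d _).mp g.2)
  have hPiv : ∀ g : MulAction.stabilizer (ConjAct (Matrix (Fin n) (Fin n) F)ˣ) (Dg α d),
      ∀ p q, d p ≠ d q →
        ((↑(ConjAct.ofConjAct (g : ConjAct (Matrix (Fin n) (Fin n) F)ˣ))⁻¹ :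
            Matrix (Fin n) (Fin n) F)) p q = 0 :=
    fun g => (comm_iff hα d _).mp
      (inv_comm _ _ ((mem_stab α d _).mp g.2))
  let e : MulAction.stabilizer (ConjAct (Matrix (Fin n) (Fin n) F)ˣ) (Dg α d) ≃
      ∀ i, (Matrix {j // d j = i} {j // d j = i} F)ˣ :=
    { toFun := fun g => fun i =>
        ⟨blk d (↑(ConjAct.ofConjAct (g : ConjAct (Matrix (Fin n) (Fin n) F)ˣ))) i,
         blk d (↑((ConjAct.ofConjAct (g : ConjAct (Matrix (Fin n) (Fin n) F)ˣ))⁻¹)) i,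
         (by rw [blk_mul d (hPv g) (hPiv g) i, Units.mul_inv, blk_one]),
         (by rw [blk_mul d (hPiv g) (hPv g) i, Units.inv_mul, blk_one])⟩
      invFun := fun B =>
        ⟨ConjAct.toConjAct (embU d B), by
          rw [mem_stab α d, ConjAct.ofConjAct_toConjAct, embU_val]
          exact (comm_iff hα d _).mpr fun p q h => emb_apply_ne d _ h⟩
      left_inv := by
        rintro ⟨g, hg⟩
        apply Subtype.ext
        show ConjAct.toConjAct _ = g
        conv_rhs => rw [← ConjAct.toConjAct_ofConjAct g]
        congr 1
        apply Units.ext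
        rw [embU_val]
        exact emb_blk d (hPv ⟨g, hg⟩)
      right_inv := by
        intro B
        funext i
        apply Units.ext
        show blk d (emb d (fun i => ((B i : Matrix {j // d j = i} {j // d j = i} F)))) i = ↑(B i)
        rw [blk_emb] }
  rw [Nat.card_congr e, Nat.card_pi]

/-- Fibers of the first projection of a sigma type. -/
def fiberFst {ι : Type*} {β : ι → Type*} (i : ι) : {x : Σ l, β l // x.1 = i} ≃ β i where
  toFun x := x.2 ▸ x.1.2
  invFun b := ⟨⟨i, b⟩, rfl⟩
  left_inv := by rintro ⟨⟨l, y⟩, rfl⟩; rfl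
  right_inv b := rfl

/-- Two labellings with the same fiber cardinalities differ by a permutation. -/
lemma exists_perm (d d' : Fin n → Fin k)
    (h : ∀ i, Fintype.card {x // d x = i} = Fintype.card {x // d' x = i}) :
    ∃ e : Equiv.Perm (Fin n), ∀ x, d (e x) = d' x := by
  refine ⟨(Equiv.sigmaFiberEquiv d').symm.trans
    ((Equiv.sigmaCongrRight fun i => Fintype.equivOfCardEq (h i).symm).trans
      (Equiv.sigmaFiberEquiv d)), fun x => ?_⟩
  exact ((Fintype.equivOfCardEq (h (d' x)).symm) ⟨x, rfl⟩).2

/-- A conjugating unit realising a permutation of a diagonal matrix. -/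
lemma perm_conj (v : Fin n → F) (e : Equiv.Perm (Fin n)) :
    ∃ g : ConjAct (Matrix (Fin n) (Fin n) F)ˣ,
      g • Matrix.diagonal (fun j => v (e j)) = Matrix.diagonal v := by
  have hab : (1 : Matrix (Fin n) (Fin n) F).submatrix e.symm ⇑(Equiv.refl (Fin n)) *
      (1 : Matrix (Fin n) (Fin n) F).submatrix e ⇑(Equiv.refl (Fin n)) = 1 := by
    rw [Matrix.one_submatrix_mul]
    simp [Matrix.submatrix_submatrix]
  have hba : (1 : Matrix (Fin n) (Fin n) F).submatrix e ⇑(Equiv.refl (Fin n)) *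
      (1 : Matrix (Fin n) (Fin n) F).submatrix e.symm ⇑(Equiv.refl (Fin n)) = 1 := by
    rw [Matrix.one_submatrix_mul]
    simp [Matrix.submatrix_submatrix]
  refine ⟨ConjAct.toConjAct
    ⟨(1 : Matrix (Fin n) (Fin n) F).submatrix e.symm ⇑(Equiv.refl (Fin n)),
     (1 : Matrix (Fin n) (Fin n) F).submatrix e ⇑(Equiv.refl (Fin n)), hab, hba⟩, ?_⟩
  rw [ConjAct.units_smul_def, ConjAct.ofConjAct_toConjAct]
  show (1 : Matrix (Fin n) (Fin n) F).submatrix e.symm ⇑(Equiv.refl (Fin n)) *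
      Matrix.diagonal (fun j => v (e j)) *
      (1 : Matrix (Fin n) (Fin n) F).submatrix e ⇑(Equiv.refl (Fin n)) = Matrix.diagonal v
  have h1 : Matrix.diagonal (fun j => v (e j)) = (Matrix.diagonal v).submatrix e e :=
    (Matrix.submatrix_diagonal_equiv v e).symm
  rw [h1, Matrix.one_submatrix_mul,
    Matrix.mul_submatrix_one (e₁ := e) (e₂ := ⇑(Equiv.refl (Fin n)))]
  simp [Matrix.submatrix_submatrix, Function.comp_def]

/-- Multiplicity function: `mu α A i` is the dimension of the kernel of `A - αᵢ`. -/
noncomputable def mu (α : Fin k → F) (A : Matrix (Fin n) (Fin n) F) (i : Fin k) : ℕ :=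
  n - (A - α i • (1 : Matrix (Fin n) (Fin n) F)).rank

lemma mu_smul (α : Fin k → F) (g : ConjAct (Matrix (Fin n) (Fin n) F)ˣ)
    (A : Matrix (Fin n) (Fin n) F) : mu α (g • A) = mu α A := by
  funext i
  unfold mu
  congr 1
  have h1 : IsUnit ((ConjAct.ofConjAct g : (Matrix (Fin n) (Fin n) F)ˣ) :
      Matrix (Fin n) (Fin n) F).det :=
    (Matrix.isUnit_iff_isUnit_det _).mp (ConjAct.ofConjAct g).isUnit
  have h2 : IsUnit ((↑(ConjAct.ofConjAct g)⁻¹ : Matrix (Fin n) (Fin n) F)).det :=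
    (Matrix.isUnit_iff_isUnit_det _).mp (ConjAct.ofConjAct g)⁻¹.isUnit
  have key : g • A - α i • (1 : Matrix (Fin n) (Fin n) F) =
      (↑(ConjAct.ofConjAct g) : Matrix (Fin n) (Fin n) F) * (A - α i • 1) *
        (↑(ConjAct.ofConjAct g)⁻¹ : Matrix (Fin n) (Fin n) F) := by
    rw [ConjAct.units_smul_def, mul_sub, sub_mul]
    congr 1
    simp only [mul_smul_comm, smul_mul_assoc, mul_one]
    rw [Units.mul_inv]
  rw [key, Matrix.rank_mul_eq_left_of_isUnit_det _ _ h2,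
    Matrix.rank_mul_eq_right_of_isUnit_det _ _ h1]

lemma mu_diag {α : Fin k → F} (hα : Function.Injective α) (d : Fin n → Fin k) :
    mu α (Dg α d) = fun i => Fintype.card {j // d j = i} := by
  funext i
  unfold mu Dg
  have hD : Matrix.diagonal (fun j => α (d j)) - α i • (1 : Matrix (Fin n) (Fin n) F) =
      Matrix.diagonal (fun j => α (d j) - α i) := by
    rw [Matrix.smul_one_eq_diagonal, Matrix.diagonal_sub]
  rw [hD, Matrix.rank_diagonal]
  have hcc : Fintype.card {j // α (d j) - α i ≠ 0} = Fintype.card {j // ¬ d j = i} :=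
    Fintype.card_congr (Equiv.subtypeEquivRight fun j => by
      rw [ne_eq, sub_eq_zero]
      exact ⟨fun h hc => h (by rw [hc]), fun h hc => h (hα hc)⟩)
  rw [hcc, Fintype.card_subtype_compl]
  have hle : Fintype.card {j // d j = i} ≤ n :=
    le_of_le_of_eq (Fintype.card_subtype_le _) (Fintype.card_fin n)
  rw [Fintype.card_fin]
  omega

lemma sum_fiber_card (d : Fin n → Fin k) : ∑ i, Fintype.card {j // d j = i} = n := by
  rw [← Fintype.card_sigma, Fintype.card_congr (Equiv.sigmaFiberEquiv d), Fintype.card_fin]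

lemma orbit_card (α : Fin k → F) (d : Fin n → Fin k) :
    Nat.card (MulAction.orbit (ConjAct (Matrix (Fin n) (Fin n) F)ˣ) (Dg α d)) *
      Nat.card (MulAction.stabilizer (ConjAct (Matrix (Fin n) (Fin n) F)ˣ) (Dg α d)) =
        Nat.card (Matrix (Fin n) (Fin n) F)ˣ := by
  have h := Nat.card_congr
    (MulAction.orbitProdStabilizerEquivGroup (ConjAct (Matrix (Fin n) (Fin n) F)ˣ) (Dg α d))
  rw [Nat.card_prod] at h
  rw [h]
  exact Nat.card_congr (ConjAct.ofConjAct (G := (Matrix (Fin n) (Fin n) F)ˣ)).toEquiv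

end Stmt3Aux

open Stmt3Aux

/-- The number of `n × n` matrices over a finite field that are diagonalizable with
every `αᵢ` an eigenvalue and all eigenvalues in `{α₁, …, α_k}` equals
`∑_{n₁+⋯+n_k = n, nᵢ ≥ 1} |GLₙ(F)| / ∏ᵢ |GL_{nᵢ}(F)|`. -/
theorem stmt_3 (F : Type) [Field F] [Fintype F] [DecidableEq F] (n k : ℕ)
    (hk : 1 ≤ k) (hkn : k ≤ n)
    (α : Fin k → F) (hα : Function.Injective α) :
    Nat.card {A : Matrix (Fin n) (Fin n) F //
        ∃ (d : Fin n → Fin k) (P : (Matrix (Fin n) (Fin n) F)ˣ),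
          Function.Surjective d ∧
          A = (P : Matrix (Fin n) (Fin n) F) * Matrix.diagonal (fun j => α (d j)) *
              ((P⁻¹ : _) : Matrix (Fin n) (Fin n) F)} =
      ∑ m ∈ (Finset.Nat.antidiagonalTuple k n).filter (fun m => ∀ i, 1 ≤ m i),
        Nat.card (Matrix (Fin n) (Fin n) F)ˣ /
          ∏ i : Fin k, Nat.card (Matrix (Fin (m i)) (Fin (m i)) F)ˣ := by
  classical
  set pred : Matrix (Fin n) (Fin n) F → Prop := fun A =>
    ∃ (d : Fin n → Fin k) (P : (Matrix (Fin n) (Fin n) F)ˣ),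
      Function.Surjective d ∧
      A = (P : Matrix (Fin n) (Fin n) F) * Matrix.diagonal (fun j => α (d j)) *
          ((P⁻¹ : _) : Matrix (Fin n) (Fin n) F) with hpred
  have predOrbit : ∀ A, pred A ↔ ∃ d : Fin n → Fin k, Function.Surjective d ∧
      A ∈ MulAction.orbit (ConjAct (Matrix (Fin n) (Fin n) F)ˣ) (Dg α d) := by
    intro A
    constructor
    · rintro ⟨d, P, hd, rfl⟩
      exact ⟨d, hd, MulAction.mem_orbit_iff.mpr ⟨ConjAct.toConjAct P, by
        rw [ConjAct.units_smul_def, ConjAct.ofConjAct_toConjAct]; rfl⟩⟩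
    · rintro ⟨d, hd, hA⟩
      obtain ⟨g, hg⟩ := MulAction.mem_orbit_iff.mp hA
      exact ⟨d, ConjAct.ofConjAct g, hd, by rw [← hg, ConjAct.units_smul_def]; rfl⟩
  have hNat : Nat.card {A : Matrix (Fin n) (Fin n) F // pred A} =
      (Finset.univ.filter pred).card := by
    rw [Nat.card_eq_fintype_card, Fintype.card_subtype]
  have hmapsto : ∀ A ∈ Finset.univ.filter pred, mu α A ∈
      (Finset.Nat.antidiagonalTuple k n).filter (fun m => ∀ i, 1 ≤ m i) := by
    intro A hA
    rw [Finset.mem_filter] at hA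
    obtain ⟨d, hd, horbA⟩ := (predOrbit A).mp hA.2
    obtain ⟨g, hg⟩ := MulAction.mem_orbit_iff.mp horbA
    have hmu : mu α A = fun i => Fintype.card {j // d j = i} := by
      rw [← hg, mu_smul, mu_diag hα]
    rw [Finset.mem_filter, Finset.Nat.mem_antidiagonalTuple]
    refine ⟨by rw [hmu]; exact sum_fiber_card d, fun i => ?_⟩
    rw [hmu]
    have : Nonempty {j // d j = i} := ⟨⟨(hd i).choose, (hd i).choose_spec⟩⟩
    exact Fintype.card_pos
  rw [hNat, Finset.card_eq_sum_card_fiberwise hmapsto]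
  apply Finset.sum_congr rfl
  intro m hm
  rw [Finset.mem_filter] at hm
  have hsum : ∑ i, m i = n := Finset.Nat.mem_antidiagonalTuple.mp hm.1
  have hpos : ∀ i, 1 ≤ m i := hm.2
  have hcards : Fintype.card (Fin n) = Fintype.card (Σ i, Fin (m i)) := by
    simp [Fintype.card_sigma, hsum]
  set E : Fin n ≃ Σ i, Fin (m i) := Fintype.equivOfCardEq hcards with hE
  set dm : Fin n → Fin k := fun j => (E j).1 with hdm
  have hfib : ∀ i, Fintype.card {j // dm j = i} = m i := by
    intro i
    rw [Fintype.card_congr ((E.subtypeEquiv (fun j => Iff.rfl)).trans (fiberFst i)),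
      Fintype.card_fin]
  have hdm_surj : Function.Surjective dm := by
    intro i
    have hne : Nonempty {j // dm j = i} := Fintype.card_pos_iff.mp (by
      rw [hfib i]; exact hpos i)
    obtain ⟨⟨j, hj⟩⟩ := hne
    exact ⟨j, hj⟩
  have horb : ∀ A, (A ∈ (Finset.univ.filter pred).filter (fun A => mu α A = m)) ↔
      A ∈ MulAction.orbit (ConjAct (Matrix (Fin n) (Fin n) F)ˣ) (Dg α dm) := by
    intro A
    simp only [Finset.mem_filter, Finset.mem_univ, true_and]
    constructor
    · rintro ⟨hp, hmu⟩
      obtain ⟨d, hd, horbA⟩ := (predOrbit A).mp hp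
      obtain ⟨g, hg⟩ := MulAction.mem_orbit_iff.mp horbA
      have h1 : mu α A = fun i => Fintype.card {j // d j = i} := by
        rw [← hg, mu_smul, mu_diag hα]
      have hfibeq : ∀ i, Fintype.card {j // d j = i} = Fintype.card {j // dm j = i} := by
        intro i
        calc Fintype.card {j // d j = i} = mu α A i := by rw [h1]
          _ = m i := by rw [hmu]
          _ = Fintype.card {j // dm j = i} := (hfib i).symm
      obtain ⟨e, he⟩ := exists_perm d dm hfibeq
      have hDg : Dg α dm = Matrix.diagonal (fun j => (fun x => α (d x)) (e j)) :=
        congrArg Matrix.diagonal (funext fun j => (congrArg α (he j)).symm)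
      obtain ⟨h, hh⟩ := perm_conj (fun x => α (d x)) e
      have hh2 : h • Dg α dm = Dg α d := by rw [hDg, hh]; rfl
      rw [← hg, ← hh2]
      exact MulAction.mem_orbit_iff.mpr ⟨g * h, mul_smul g h _⟩
    · intro hA
      obtain ⟨g, hg⟩ := MulAction.mem_orbit_iff.mp hA
      refine ⟨(predOrbit A).mpr ⟨dm, hdm_surj, hA⟩, ?_⟩
      rw [← hg, mu_smul, mu_diag hα]
      funext i
      exact hfib i
  have hcardfib : ((Finset.univ.filter pred).filter (fun A => mu α A = m)).card =
      Nat.card (MulAction.orbit (ConjAct (Matrix (Fin n) (Fin n) F)ˣ) (Dg α dm)) := by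
    rw [← Nat.card_eq_finsetCard]
    exact Nat.card_congr (Equiv.subtypeEquivRight (fun A => by
      rw [← horb A]))
  rw [hcardfib]
  have hstab := stab_card hα dm
  have hos := orbit_card α dm
  have hstabpos : 0 < Nat.card
      (MulAction.stabilizer (ConjAct (Matrix (Fin n) (Fin n) F)ˣ) (Dg α dm)) :=
    Nat.card_pos
  have hprod : ∏ i : Fin k, Nat.card (Matrix {j // dm j = i} {j // dm j = i} F)ˣ =
      ∏ i : Fin k, Nat.card (Matrix (Fin (m i)) (Fin (m i)) F)ˣ := by
    apply Finset.prod_congr rfl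
    intro i _
    exact Nat.card_congr (Units.mapEquiv (RingEquiv.toMulEquiv (AlgEquiv.toRingEquiv
      (Matrix.reindexAlgEquiv F F (Fintype.equivFinOfCardEq (hfib i)))))).toEquiv
  rw [← hprod, ← hstab]
  exact (Nat.div_eq_of_eq_mul_left hstabpos hos.symm).symm
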